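/- Let f : (ℂ³,0) → (ℂ,0) be an isolated singularity whose support contains the monomial x^k (k ≥ 2) and such that f* := f − e·x^k (removing the x^k term, e ≠ 0 its coefficient) is not nearly convenient with respect to the axis 0x. Then the path Φ(t) = (t, 0, 0) satisfies ∂f/∂y ∘ Φ = 0 and ∂f/∂z ∘ Φ = 0, and ord(∂f/∂x ∘ Φ) = k − 1; consequently the Łojasiewicz exponent satisfies L₀(f) ≥ k − 1. -/

import Mathlib

open MvPowerSeries

/-- `v`-weighted degree of an exponent. -/
noncomputable def wdeg3 (v : Fin 3 → ℕ) (α : Fin 3 →₀ ℕ) : ℕ := ∑ i, v i * α i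

/-- The `v`-order of a power series: minimal `v`-weighted degree on the support. -/
noncomputable def vord3 (v : Fin 3 → ℕ) (f : MvPowerSeries (Fin 3) ℂ) : ℕ :=
  sInf {w | ∃ α, MvPowerSeries.coeff α f ≠ 0 ∧ wdeg3 v α = w}

/-- The initial form `f_S` of `f` on the face `S` supported by a positive vector `v`:
the (polynomial) sum of the terms of `f` of minimal `v`-weighted degree. -/
noncomputable def inForm (v : Fin 3 → ℕ) (f : MvPowerSeries (Fin 3) ℂ) :
    MvPolynomial (Fin 3) ℂ :=
  ∑ α ∈ Finset.Iic ((Finsupp.equivFunOnFinite.symm fun _ => vord3 v f : Fin 3 →₀ ℕ)),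
    if wdeg3 v α = vord3 v f then MvPolynomial.monomial α (MvPowerSeries.coeff α f) else 0

/-- The formal partial derivative of a power series in three variables. -/
noncomputable def pdPS (i : Fin 3) (f : MvPowerSeries (Fin 3) ℂ) : MvPowerSeries (Fin 3) ℂ :=
  fun α => ((α i : ℂ) + 1) * MvPowerSeries.coeff (α + Finsupp.single i 1) f

/-- `f` defines an isolated singularity at `0`: `f(0) = 0`, `∇f(0) = 0`, and the Milnor
algebra is finite dimensional (equivalently, `∇f` has an isolated zero at `0`). -/
def IsIsolatedSing (f : MvPowerSeries (Fin 3) ℂ) : Prop :=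
  MvPowerSeries.coeff 0 f = 0 ∧ (∀ i, MvPowerSeries.coeff 0 (pdPS i f) = 0) ∧
    FiniteDimensional ℂ
      (MvPowerSeries (Fin 3) ℂ ⧸ Ideal.span {pdPS 0 f, pdPS 1 f, pdPS 2 f})

/-- Kushnirenko (`H`-) non-degeneracy: for every compact face (cut out by a supporting
vector with positive coordinates), the partial derivatives of the face polynomial have no
common zero in the torus `(ℂ*)³`. -/
def HNonDeg (f : MvPowerSeries (Fin 3) ℂ) : Prop :=
  ∀ v : Fin 3 → ℕ, (∀ i, 0 < v i) →
    ¬ ∃ z : Fin 3 → ℂ, (∀ i, z i ≠ 0) ∧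
      ∀ i, MvPolynomial.eval z (MvPolynomial.pderiv i (inForm v f)) = 0

/-- Composition (substitution) `f ∘ Φ` of a power series in `n` variables with an `n`-tuple of
one-variable power series with zero constant term. -/
noncomputable def compPS {n : ℕ} (f : MvPowerSeries (Fin n) ℂ) (Φ : Fin n → PowerSeries ℂ) :
    PowerSeries ℂ :=
  PowerSeries.mk fun m =>
    ∑ α ∈ Finset.Iic ((Finsupp.equivFunOnFinite.symm fun _ => m : Fin n →₀ ℕ)),
      MvPowerSeries.coeff α f * PowerSeries.coeff m (∏ i, (Φ i) ^ (α i))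

/-- The path `Φ(t) = (t, 0, 0)`. -/
noncomputable def pathX : Fin 3 → PowerSeries ℂ := ![PowerSeries.X, 0, 0]

lemma coeff_pdPS (i : Fin 3) (g : MvPowerSeries (Fin 3) ℂ) (β : Fin 3 →₀ ℕ) :
    MvPowerSeries.coeff β (pdPS i g)
      = ((β i : ℂ) + 1) * MvPowerSeries.coeff (β + Finsupp.single i 1) g := rfl

lemma coeff_compPS_pathX (g : MvPowerSeries (Fin 3) ℂ) (m : ℕ) :
    PowerSeries.coeff m (compPS g pathX) =
      MvPowerSeries.coeff (Finsupp.single 0 m) g := by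
  rw [compPS, PowerSeries.coeff_mk]
  rw [Finset.sum_eq_single (Finsupp.single (0 : Fin 3) m)]
  · simp [pathX, Fin.prod_univ_three, Finsupp.single_apply, PowerSeries.coeff_X_pow]
  · intro α hα hne
    rcases Nat.eq_zero_or_pos (α 1) with h1 | h1
    · rcases Nat.eq_zero_or_pos (α 2) with h2 | h2
      · have h0 : α 0 ≠ m := by
          intro h0
          apply hne
          ext j
          fin_cases j <;> simp [Finsupp.single_apply, h0, h1, h2]
        simp only [pathX, Fin.prod_univ_three, Matrix.cons_val_zero, h1, h2, pow_zero, mul_one, PowerSeries.coeff_X_pow]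
        rw [if_neg (fun h => h0 h.symm), mul_zero]
      · simp [pathX, Fin.prod_univ_three, zero_pow h2.ne']
    · simp [pathX, Fin.prod_univ_three, zero_pow h1.ne']
  · intro h
    exact absurd (Finset.mem_Iic.mpr ((Finsupp.le_iff _ _).mpr (by
      intro j hj; simp [Finsupp.single_apply]; split <;> simp))) h

theorem stmt_19 (f : MvPowerSeries (Fin 3) ℂ) (hiso : IsIsolatedSing f)
    (k : ℕ) (hk : 2 ≤ k) (e : ℂ) (he : e ≠ 0)
    (hcoeff : MvPowerSeries.coeff (Finsupp.single 0 k) f = e)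
    -- `f - e·x^k` is not nearly convenient with respect to `0x`: every other monomial of `f`
    -- has `y`-degree plus `z`-degree at least `2`.
    (hnnc : ∀ α : Fin 3 →₀ ℕ, MvPowerSeries.coeff α f ≠ 0 → α ≠ Finsupp.single 0 k →
      2 ≤ α 1 + α 2) :
    compPS (pdPS 1 f) pathX = 0 ∧
    compPS (pdPS 2 f) pathX = 0 ∧
    (compPS (pdPS 0 f) pathX).order = (k - 1 : ℕ) ∧
    -- consequently `L₀(f) ≥ k − 1`, witnessed by a path:
    ∃ Φ : Fin 3 → PowerSeries ℂ, (∀ i, PowerSeries.constantCoeff (Φ i) = 0) ∧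
      (∃ i, Φ i ≠ 0) ∧
      ((k : ℕ∞) - 1) * (⨅ i, (Φ i).order) ≤ ⨅ i, (compPS (pdPS i f) Φ).order := by
  have key : ∀ n : ℕ, n ≠ k → MvPowerSeries.coeff (Finsupp.single 0 n) f = 0 := by
    intro n hn
    by_contra h
    have hne : (Finsupp.single (0 : Fin 3) n) ≠ Finsupp.single 0 k :=
      fun h' => hn (Finsupp.single_injective _ h')
    have := hnnc _ h hne
    simp [Finsupp.single_apply] at this
  have h1 : compPS (pdPS 1 f) pathX = 0 := by
    ext m
    rw [coeff_compPS_pathX, coeff_pdPS]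
    have hz : MvPowerSeries.coeff (Finsupp.single 0 m + Finsupp.single 1 1) f = 0 := by
      by_contra h
      have hne : Finsupp.single (0 : Fin 3) m + Finsupp.single 1 1 ≠ Finsupp.single 0 k := by
        intro h'
        have := congrArg (fun g : Fin 3 →₀ ℕ => g 1) h'
        simp [Finsupp.single_apply] at this
      have := hnnc _ h hne
      simp [Finsupp.single_apply] at this
    simp [hz]
  have h2 : compPS (pdPS 2 f) pathX = 0 := by
    ext m
    rw [coeff_compPS_pathX, coeff_pdPS]
    have hz : MvPowerSeries.coeff (Finsupp.single 0 m + Finsupp.single 2 1) f = 0 := by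
      by_contra h
      have hne : Finsupp.single (0 : Fin 3) m + Finsupp.single 2 1 ≠ Finsupp.single 0 k := by
        intro h'
        have := congrArg (fun g : Fin 3 →₀ ℕ => g 2) h'
        simp [Finsupp.single_apply] at this
      have := hnnc _ h hne
      simp [Finsupp.single_apply] at this
    simp [hz]
  have hx : ∀ m : ℕ, PowerSeries.coeff m (compPS (pdPS 0 f) pathX)
      = ((m : ℂ) + 1) * MvPowerSeries.coeff (Finsupp.single 0 (m + 1)) f := by
    intro m
    rw [coeff_compPS_pathX, coeff_pdPS, ← Finsupp.single_add]
    simp [Finsupp.single_apply]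
  have hkpos : 1 ≤ k := by omega
  have hsub : (k - 1) + 1 = k := by omega
  have hord : (compPS (pdPS 0 f) pathX).order = (k - 1 : ℕ) := by
    rw [PowerSeries.order_eq_nat]
    constructor
    · rw [hx, hsub, hcoeff]
      apply mul_ne_zero _ he
      have : ((k - 1 : ℕ) : ℂ) + 1 = ((k : ℕ) : ℂ) := by
        rw [← Nat.cast_add_one, hsub]
      rw [this]
      exact_mod_cast (by omega : k ≠ 0)
    · intro i hi
      rw [hx, key (i + 1) (by omega), mul_zero]
  refine ⟨h1, h2, hord, pathX, ?_, ⟨0, by simp [pathX]⟩, ?_⟩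
  · intro i
    fin_cases i <;> simp [pathX]
  · have hΦord : (⨅ i, (pathX i).order) = 1 := by
      apply le_antisymm
      · exact le_trans (iInf_le _ 0) (by simp [pathX, PowerSeries.order_X])
      · exact le_iInf fun i => by
          fin_cases i <;> simp [pathX, PowerSeries.order_X]
    rw [hΦord, mul_one]
    apply le_iInf
    intro i
    fin_cases i
    · show (k : ℕ∞) - 1 ≤ (compPS (pdPS 0 f) pathX).order
      rw [hord]
      have : ((k - 1 : ℕ) : ℕ∞) = (k : ℕ∞) - 1 := by
        rw [← Nat.cast_one (R := ℕ∞)]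
        exact_mod_cast rfl
      rw [this]
    · show (k : ℕ∞) - 1 ≤ (compPS (pdPS 1 f) pathX).order
      rw [h1, PowerSeries.order_zero]
      exact le_top
    · show (k : ℕ∞) - 1 ≤ (compPS (pdPS 2 f) pathX).order
      rw [h2, PowerSeries.order_zero]
      exact le_top
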